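/- Let p be a prime element of 𝒪 with p ≡ 1 (mod 3), let k ≥ 1 be an integer, and let m, b, w ∈ 𝒪 with mbw coprime to p. For 0 ≤ r ≤ k set Σ_r := ∑_{y (p^k)*, 3³·b·w·y ≡ m³ (mod p^r)} (y/p^k)₃ · e(y/p^k). Then: (i) if k > 1, Σ_r = 0 for every 0 ≤ r < k, and consequently (w/p^k)₃ · ∑_{r=0}^{k} μ(p^{k−r})·N(p^r)·Σ_r = N(p^k)·(b⁻¹/p^k)₃·e(m³·(3³·b·w)⁻¹/p^k); (ii) if k = 1, then (w/p)₃ · ∑_{r=0}^{1} μ(p^{1−r})·N(p^r)·Σ_r = N(p)·(b⁻¹/p)₃·e(m³·(3³·b·w)⁻¹/p) + (w/p)₃·μ(p)·g(1,p). -/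

import Mathlib

set_option maxHeartbeats 1000000
set_option synthInstance.maxHeartbeats 400000


noncomputable section

namespace CubicSeries

open scoped Classical

def ω : ℂ := Complex.exp (2 * Real.pi * Complex.I / 3)

def O : Subring ℂ := Subring.closure {ω}

abbrev OK : Type _ := O

def δ : ℂ := ω - ω ^ 2

def eC (z : ℂ) : ℂ :=
  Complex.exp (2 * Real.pi * Complex.I * (z / δ + (starRingEnd ℂ) (z / δ)))

def rep {I : Ideal OK} (x : OK ⧸ I) : OK :=
  Function.surjInv Ideal.Quotient.mk_surjective x

/-- `N(c) = |𝒪/(c)|`, the absolute norm. -/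
def Nm (c : OK) : ℕ := Nat.card (OK ⧸ Ideal.span {c})

/-- `φ(c) = |(𝒪/(c))ˣ|`. -/
def totient (c : OK) : ℕ := Nat.card ((OK ⧸ Ideal.span {c})ˣ)

/-- a multiplicative inverse modulo `c` (an arbitrary element when `x` is not invertible). -/
def invMod (c x : OK) : OK :=
  rep (Ring.inverse (Ideal.Quotient.mk (Ideal.span {c}) x))

def T (A B c : OK) : ℂ :=
  ∑ᶠ x : OK ⧸ Ideal.span {c}, eC (((A * rep x ^ 3 + B * rep x : OK) : ℂ) / (c : ℂ))

/-- The cubic residue symbol `(x/π)₃` for a prime element `π` not dividing `3`: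
the unique cube root of unity congruent to `x^{(N(π)-1)/3}` mod `π`, and `0` if `π ∣ x`. -/
def cubicCharP (π x : OK) : OK :=
  if h : ∃ ζ : OK, ζ ^ 3 = 1 ∧ π ∣ ζ - x ^ ((Nm π - 1) / 3) ∧ ¬ π ∣ x then h.choose else 0

/-- The cubic residue symbol `(x/c)₃` for `c` coprime to `3`, defined via a factorization of
`c` into a unit times prime elements (with multiplicity). -/
def cubicChar (c x : OK) : OK :=
  if h : ∃ fs : OKˣ × Multiset OK, (∀ π ∈ fs.2, Prime π) ∧ c = (fs.1 : OK) * fs.2.prod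
  then (h.choose.2.map fun π => cubicCharP π x).prod
  else 0

/-- The cubic Gauss sum `g(a,c) = ∑_{x (c)*} (x/c)₃ e(ax/c)`. -/
def gaussSum (a c : OK) : ℂ :=
  ∑ᶠ u : (OK ⧸ Ideal.span {c})ˣ,
    ((cubicChar c (rep u.val) : OK) : ℂ) * eC (((a * rep u.val : OK) : ℂ) / (c : ℂ))

/-- The Möbius function: `μ(c) = (−1)^r` if `(c)` is a product of `r` distinct prime ideals,
and `μ(c) = 0` otherwise. -/
def moebius (c : OK) : ℤ :=
  if h : ∃ s : Finset (Ideal OK), (∀ P ∈ s, Prime P) ∧ Ideal.span {c} = ∏ P ∈ s, P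
  then (-1) ^ h.choose.card
  else 0

/-- `p^n` modulo `c`, where a negative exponent means the inverse of `p^{-n}` mod `c`. -/
def ppow (c p : OK) (n : ℤ) : OK :=
  if 0 ≤ n then p ^ n.toNat else invMod c (p ^ (-n).toNat)

/-- A choice of generator of a (principal) ideal. -/
def gen (J : Ideal OK) : OK := if h : ∃ q : OK, Ideal.span {q} = J then h.choose else 0

/-- A choice of cofactor: `cofactor c q` is a `d` with `c = q·d`, when one exists. -/
def cofactor (c q : OK) : OK := if h : ∃ d : OK, c = q * d then h.choose else 0


/-- The restricted sum `Σ_r` of Statement 12. -/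
def Sig (p m b w : OK) (k r : ℕ) : ℂ :=
  ∑ᶠ u : (OK ⧸ Ideal.span {p ^ k})ˣ,
    if p ^ r ∣ 3 ^ 3 * b * w * rep u.val - m ^ 3 then
      ((cubicCharP p (rep u.val) ^ k : OK) : ℂ) *
        eC (((rep u.val : OK) : ℂ) / ((p ^ k : OK) : ℂ))
    else 0



lemma omega_pow_three : ω ^ 3 = 1 := by
  rw [ω, ← Complex.exp_nat_mul]
  norm_num
  rw [show (3:ℂ) * (2 * Real.pi * Complex.I / 3) = 2 * Real.pi * Complex.I by ring]
  exact Complex.exp_two_pi_mul_I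

lemma omega_ne_zero : ω ≠ 0 := Complex.exp_ne_zero _

lemma two_pi_I_ne : (2 * (Real.pi:ℂ) * Complex.I : ℂ) ≠ 0 := by
  simp [Real.pi_ne_zero, Complex.I_ne_zero]

lemma omega_ne_one : ω ≠ 1 := by
  intro h
  rw [ω, Complex.exp_eq_one_iff] at h
  obtain ⟨n, h⟩ := h
  have h3 : (1 : ℂ) = 3 * (n : ℂ) := by
    have h' : 2 * (Real.pi:ℂ) * Complex.I * 1 = 2 * (Real.pi:ℂ) * Complex.I * (3 * n) := by
      rw [mul_one]
      linear_combination 3 * h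
    exact mul_left_cancel₀ two_pi_I_ne h'
  have : (1 : ℤ) = 3 * n := by exact_mod_cast h3
  omega

lemma omega_sq_add : ω ^ 2 + ω + 1 = 0 := by
  have h3 := omega_pow_three
  have h1 : ω - 1 ≠ 0 := sub_ne_zero.mpr omega_ne_one
  have hm : (ω - 1) * (ω ^ 2 + ω + 1) = 0 := by linear_combination h3
  exact (mul_eq_zero.mp hm).resolve_left h1

lemma conj_omega : (starRingEnd ℂ) ω = ω ^ 2 := by
  have h : (starRingEnd ℂ) ω * ω = 1 := by
    rw [ω, ← Complex.exp_conj, ← Complex.exp_add]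
    have : (starRingEnd ℂ) (2 * Real.pi * Complex.I / 3) = -(2 * Real.pi * Complex.I / 3) := by
      rw [map_div₀, map_mul, map_mul, Complex.conj_I, Complex.conj_ofReal,
        map_ofNat, map_ofNat]
      ring
    rw [this, neg_add_cancel, Complex.exp_zero]
  have h2 : ω ^ 2 * ω = 1 := by rw [← pow_succ]; exact omega_pow_three
  exact mul_right_cancel₀ omega_ne_zero (h.trans h2.symm)

lemma omega_sq_ne_omega : ω ^ 2 ≠ ω := by
  intro h
  have : ω * (ω - 1) = 0 := by linear_combination h
  rcases mul_eq_zero.mp this with h' | h'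
  · exact omega_ne_zero h'
  · exact omega_ne_one (sub_eq_zero.mp h')

lemma delta_ne_zero : δ ≠ 0 := fun h => omega_sq_ne_omega (by rw [δ] at h; linear_combination -h)

lemma conj_delta : (starRingEnd ℂ) δ = -δ := by
  have h4 : ω ^ 4 = ω := by
    rw [show (4:ℕ) = 3 + 1 by rfl, pow_succ, omega_pow_three, one_mul]
  rw [δ, map_sub, conj_omega, map_pow, conj_omega]
  rw [← pow_mul]
  norm_num [h4]


lemma omega_mem : ω ∈ O := Subring.subset_closure rfl

lemma mem_O_iff {z : ℂ} : z ∈ O ↔ ∃ a b : ℤ, z = (a : ℂ) + (b : ℂ) * ω := by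
  constructor
  · intro hz
    induction hz using Subring.closure_induction with
    | mem x hx => exact ⟨0, 1, by simp [Set.mem_singleton_iff.mp hx]⟩
    | zero => exact ⟨0, 0, by simp⟩
    | one => exact ⟨1, 0, by simp⟩
    | add x y _ _ hx hy =>
        obtain ⟨a, b, rfl⟩ := hx; obtain ⟨c, d, rfl⟩ := hy
        exact ⟨a + c, b + d, by push_cast; ring⟩
    | neg x _ hx =>
        obtain ⟨a, b, rfl⟩ := hx
        exact ⟨-a, -b, by push_cast; ring⟩
    | mul x y _ _ hx hy =>
        obtain ⟨a, b, rfl⟩ := hx; obtain ⟨c, d, rfl⟩ := hy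
        refine ⟨a * c - b * d, a * d + b * c - b * d, ?_⟩
        have h2 : ω ^ 2 = -1 - ω := by linear_combination omega_sq_add
        push_cast
        linear_combination ((b:ℂ) * d) * h2
  · rintro ⟨a, b, rfl⟩
    exact add_mem (intCast_mem O a) (mul_mem (intCast_mem O b) omega_mem)

noncomputable def toO (a b : ℤ) : OK := ⟨(a:ℂ) + (b:ℂ) * ω, mem_O_iff.mpr ⟨a, b, rfl⟩⟩

@[simp] lemma toO_coe (a b : ℤ) : ((toO a b : OK) : ℂ) = (a:ℂ) + (b:ℂ) * ω := rfl

lemma coe_intCast (n : ℤ) : ((n : OK) : ℂ) = (n : ℂ) := by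
  push_cast; rfl

lemma exists_toO (y : OK) : ∃ a b : ℤ, y = toO a b := by
  obtain ⟨a, b, h⟩ := mem_O_iff.mp y.2
  exact ⟨a, b, Subtype.ext h⟩

lemma toO_sub (a b c d : ℤ) : toO a b - toO c d = toO (a - c) (b - d) := by
  apply Subtype.ext; push_cast [toO]; ring

lemma norm_form (a b : ℤ) : toO a b * toO (a - b) (-b) = ((a^2 - a*b + b^2 : ℤ) : OK) := by
  apply Subtype.ext
  have h2 : ω ^ 2 = -1 - ω := by linear_combination omega_sq_add
  push_cast [toO, coe_intCast]
  linear_combination (-(b:ℂ)^2) * h2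

lemma norm_form_pos {a b : ℤ} (h : ¬(a = 0 ∧ b = 0)) : 0 < a^2 - a*b + b^2 := by
  rcases eq_or_ne b 0 with rfl | hb
  · have ha : a ≠ 0 := fun h' => h ⟨h', rfl⟩
    have : 0 < a ^ 2 := by positivity
    nlinarith
  · have : 0 < b ^ 2 := by positivity
    nlinarith [sq_nonneg (2*a - b)]

lemma int_dvd_toO {n a b : ℤ} (ha : n ∣ a) (hb : n ∣ b) : (n : OK) ∣ toO a b := by
  obtain ⟨u, rfl⟩ := ha; obtain ⟨v, rfl⟩ := hb
  exact ⟨toO u v, by apply Subtype.ext; push_cast [toO, coe_intCast]; ring⟩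

lemma finite_quotient {c : OK} (hc : c ≠ 0) : Finite (OK ⧸ Ideal.span {c}) := by
  obtain ⟨a, b, rfl⟩ := exists_toO c
  set n : ℤ := a^2 - a*b + b^2 with hn
  have hab : ¬(a = 0 ∧ b = 0) := by
    rintro ⟨rfl, rfl⟩; exact hc (by apply Subtype.ext; simp [toO])
  have hnpos : 0 < n := norm_form_pos hab
  set N : ℕ := n.toNat with hN
  haveI : NeZero N := ⟨by omega⟩
  have hcn : toO a b ∣ (N : OK) := by
    refine ⟨toO (a - b) (-b), ?_⟩
    rw [show ((N : ℕ) : OK) = ((n : ℤ) : OK) by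
      rw [show ((N : ℕ) : OK) = ((N : ℤ) : OK) by push_cast; rfl]
      congr 1
      omega, hn, ← norm_form a b]
  refine Finite.of_surjective
    (fun ij : ZMod N × ZMod N =>
      Ideal.Quotient.mk (Ideal.span {toO a b}) (toO ij.1.val ij.2.val)) ?_
  intro x
  obtain ⟨y, rfl⟩ := Ideal.Quotient.mk_surjective x
  obtain ⟨s, t, rfl⟩ := exists_toO y
  refine ⟨((s : ZMod N), (t : ZMod N)), ?_⟩
  rw [Ideal.Quotient.mk_eq_mk_iff_sub_mem, Ideal.mem_span_singleton]
  have hs : (N : ℤ) ∣ (((s : ZMod N).val : ℤ) - s) := by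
    have : (((((s : ZMod N).val : ℤ) - s) : ℤ) : ZMod N) = 0 := by
      push_cast [ZMod.natCast_val, ZMod.intCast_cast]
      simp
    exact (ZMod.intCast_zmod_eq_zero_iff_dvd _ _).mp this
  have ht : (N : ℤ) ∣ (((t : ZMod N).val : ℤ) - t) := by
    have : (((((t : ZMod N).val : ℤ) - t) : ℤ) : ZMod N) = 0 := by
      push_cast [ZMod.natCast_val, ZMod.intCast_cast]
      simp
    exact (ZMod.intCast_zmod_eq_zero_iff_dvd _ _).mp this
  rw [toO_sub]
  exact dvd_trans hcn (by
    have := int_dvd_toO hs ht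
    rwa [show (((N:ℕ):ℤ) : OK) = ((N:ℕ) : OK) by push_cast; rfl] at this)


lemma coe_ne_zero {c : OK} (hc : c ≠ 0) : (c : ℂ) ≠ 0 := by
  intro h
  exact hc (Subtype.ext h)

lemma eC_add (x y : ℂ) : eC (x + y) = eC x * eC y := by
  rw [eC, eC, eC, ← Complex.exp_add]
  congr 1
  rw [add_div, map_add]
  ring

lemma trc_eq (z : ℂ) : z / δ + (starRingEnd ℂ) (z / δ) = (z - (starRingEnd ℂ) z) / δ := by
  rw [map_div₀, conj_delta]
  field_simp [delta_ne_zero]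
  ring

lemma eC_mem {z : ℂ} (hz : z ∈ O) : eC z = 1 := by
  obtain ⟨a, b, rfl⟩ := mem_O_iff.mp hz
  rw [eC, trc_eq]
  have hconj : (starRingEnd ℂ) ((a:ℂ) + (b:ℂ) * ω) = (a:ℂ) + (b:ℂ) * ω ^ 2 := by
    rw [map_add, map_mul, conj_omega]
    simp
  rw [hconj]
  have harg : ((a:ℂ) + (b:ℂ) * ω - ((a:ℂ) + (b:ℂ) * ω ^ 2)) / δ = (b:ℂ) := by
    rw [div_eq_iff delta_ne_zero, δ]; ring
  rw [harg]
  rw [show 2 * (Real.pi:ℂ) * Complex.I * (b:ℂ) = (b:ℂ) * (2 * Real.pi * Complex.I) by ring]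
  exact Complex.exp_int_mul_two_pi_mul_I b

lemma eC_eq_one_exists {z : ℂ} (h : eC z = 1) :
    ∃ n : ℤ, (z - (starRingEnd ℂ) z) / δ = (n : ℂ) := by
  rw [eC, Complex.exp_eq_one_iff] at h
  obtain ⟨n, hn⟩ := h
  refine ⟨n, ?_⟩
  rw [← trc_eq]
  apply mul_left_cancel₀ two_pi_I_ne
  rw [hn]; ring

lemma eC_coe_mem (x : OK) : eC (x : ℂ) = 1 := eC_mem x.2

lemma eC_div_congr {c x y : OK} (hc : c ≠ 0) (h : c ∣ x - y) :
    eC ((x:ℂ) / (c:ℂ)) = eC ((y:ℂ) / (c:ℂ)) := by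
  obtain ⟨d, hd⟩ := h
  have hcc := coe_ne_zero hc
  have hx : (x:ℂ) / (c:ℂ) = (d:ℂ) + (y:ℂ) / (c:ℂ) := by
    have hC : (x:ℂ) - (y:ℂ) = (c:ℂ) * (d:ℂ) := by
      exact_mod_cast congrArg (Subtype.val) hd
    field_simp
    linear_combination hC
  rw [hx, eC_add, eC_coe_mem, one_mul]

lemma exists_eC_ne_one {c : OK} (hc : c ≠ 0) (hcu : ¬IsUnit c) :
    ∃ y : OK, eC ((y:ℂ) / (c:ℂ)) ≠ 1 := by
  by_contra hall
  push_neg at hall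
  have hcc := coe_ne_zero hc
  set z : ℂ := ((c:ℂ))⁻¹ with hz
  obtain ⟨n₁, hn₁⟩ := eC_eq_one_exists (hall 1)
  obtain ⟨n₂, hn₂⟩ := eC_eq_one_exists (hall ⟨ω, omega_mem⟩)
  -- rewrite the traces
  have h1 : z - (starRingEnd ℂ) z = (n₁:ℂ) * δ := by
    rw [div_eq_iff delta_ne_zero] at hn₁
    rw [hz, map_inv₀]
    simpa [map_inv₀, one_div] using hn₁
  have hzo : ((⟨ω, omega_mem⟩ : OK) : ℂ) = ω := rfl
  have h2 : z * ω - (starRingEnd ℂ) z * ω ^ 2 = (n₂:ℂ) * δ := by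
    rw [div_eq_iff delta_ne_zero] at hn₂
    rw [hzo] at hn₂
    calc z * ω - (starRingEnd ℂ) z * ω ^ 2
        = ω / (c:ℂ) - (starRingEnd ℂ) (ω/(c:ℂ)) := by
          rw [map_div₀, conj_omega, hz, map_inv₀]
          ring
      _ = (n₂:ℂ) * δ := hn₂
  have hzval : z = (n₂:ℂ) - (n₁:ℂ) * ω ^ 2 := by
    have hδ : δ = ω - ω ^ 2 := rfl
    have hzd : z * δ = ((n₂:ℂ) - (n₁:ℂ) * ω ^ 2) * δ := by
      linear_combination h2 - ω^2 * h1 + z * hδ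
    exact mul_right_cancel₀ delta_ne_zero hzd
  have hmem : z ∈ O := by
    rw [mem_O_iff]
    refine ⟨n₂ + n₁, n₁, ?_⟩
    have h2' : ω ^ 2 = -1 - ω := by linear_combination omega_sq_add
    rw [hzval, h2']
    push_cast
    ring
  have : IsUnit c := by
    refine IsUnit.of_mul_eq_one (a := c) ⟨z, hmem⟩ ?_
    apply Subtype.ext
    show (c:ℂ) * z = 1
    rw [hz]
    exact mul_inv_cancel₀ hcc
  exact hcu this


noncomputable def ωK : OK := ⟨ω, omega_mem⟩

lemma coeO (x : OK) : (x : ℂ) = x.1 := rfl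

lemma omK_pow_three : ωK ^ 3 = 1 := by
  apply Subtype.ext; push_cast [ωK]; exact omega_pow_three

lemma omK_sq_add : ωK ^ 2 + ωK + 1 = 0 := by
  apply Subtype.ext; push_cast [ωK]; exact omega_sq_add

lemma omK_unit : ωK * ωK ^ 2 = 1 := by
  apply Subtype.ext; push_cast [ωK]
  rw [← pow_succ']; exact omega_pow_three

lemma omK_ne_one : ωK ≠ 1 := fun h => omega_ne_one (congrArg Subtype.val h)

lemma omK_sq_ne_one : ωK ^ 2 ≠ 1 := by
  intro h
  have h' : ω ^ 2 = 1 := by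
    have := congrArg Subtype.val h
    push_cast [ωK] at this
    exact this
  have hh : ω * ω ^ 2 = 1 := by rw [← pow_succ']; exact omega_pow_three
  rw [h', mul_one] at hh
  exact omega_ne_one hh

lemma omK_sq_ne_omK : ωK ^ 2 ≠ ωK := by
  intro h
  apply omega_sq_ne_omega
  have := congrArg Subtype.val h
  push_cast [ωK] at this
  exact this

lemma cube_roots {ζ : OK} (h : ζ ^ 3 = 1) : ζ = 1 ∨ ζ = ωK ∨ ζ = ωK ^ 2 := by
  have key : (ζ - 1) * (ζ - ωK) * (ζ - ωK ^ 2) = 0 := by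
    have e1 : ωK ^ 3 = 1 := omK_pow_three
    have e2 : ωK ^ 2 + ωK + 1 = 0 := omK_sq_add
    linear_combination h + (ζ - ζ^2) * e2 + (ζ - 1) * e1
  rcases mul_eq_zero.mp key with h' | h'
  · rcases mul_eq_zero.mp h' with h'' | h''
    · exact Or.inl (by linear_combination h'')
    · exact Or.inr (Or.inl (by linear_combination h''))
  · exact Or.inr (Or.inr (by linear_combination h'))

lemma one_sub_omK_mul : (1 - ωK) * (1 - ωK ^ 2) = 3 := by
  have e1 : ωK ^ 3 = 1 := omK_pow_three
  have e2 : ωK ^ 2 + ωK + 1 = 0 := omK_sq_add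
  linear_combination e1 - e2

lemma one_sub_omK_dvd : (1 - ωK) ∣ (3 : OK) := ⟨1 - ωK ^ 2, one_sub_omK_mul.symm⟩
lemma one_sub_omK_sq_dvd : (1 - ωK ^ 2) ∣ (3 : OK) :=
  ⟨1 - ωK, by rw [mul_comm]; exact one_sub_omK_mul.symm⟩
lemma omK_sub_omK_sq_dvd : (ωK - ωK ^ 2) ∣ (3 : OK) := by
  refine ⟨ωK ^ 2 * (1 - ωK ^ 2), ?_⟩
  have e1 : ωK ^ 3 = 1 := omK_pow_three
  have := one_sub_omK_mul
  linear_combination -this - (1-ωK)*(1-ωK^2)*e1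

lemma mk_eq_zero_iff {c x : OK} :
    Ideal.Quotient.mk (Ideal.span {c}) x = 0 ↔ c ∣ x := by
  rw [Ideal.Quotient.eq_zero_iff_mem, Ideal.mem_span_singleton]

lemma mk_eq_mk_iff_dvd {c x y : OK} :
    Ideal.Quotient.mk (Ideal.span {c}) x = Ideal.Quotient.mk (Ideal.span {c}) y ↔ c ∣ x - y := by
  rw [Ideal.Quotient.mk_eq_mk_iff_sub_mem, Ideal.mem_span_singleton]

section Chi
variable {p : OK} (hp : Prime p) (hp3 : (3 : OK) ∣ p - 1)
include hp hp3

lemma not_dvd_three : ¬ p ∣ (3 : OK) := by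
  intro h
  have h1 : p ∣ p - 1 := h.trans hp3
  have : p ∣ 1 := (dvd_sub_right dvd_rfl).mp (by simpa using h1.neg_right)
  exact hp.not_unit (isUnit_of_dvd_one this)

lemma chi_unique {ζ ζ' : OK} (hζ : ζ ^ 3 = 1) (hζ' : ζ' ^ 3 = 1)
    (hd : p ∣ ζ - ζ') : ζ = ζ' := by
  by_contra hne
  apply not_dvd_three hp hp3
  have key : ∀ a b : OK, a ≠ b → (a - b) ∣ (3:OK) →  False → True := fun _ _ _ _ _ => trivial
  -- enumerate cases
  rcases cube_roots hζ with rfl | rfl | rfl <;> rcases cube_roots hζ' with rfl | rfl | rfl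
  · exact absurd rfl hne
  · exact hd.trans one_sub_omK_dvd
  · exact hd.trans one_sub_omK_sq_dvd
  · exact (dvd_neg.mpr hd).trans (by rw [neg_sub]; exact one_sub_omK_dvd)
  · exact absurd rfl hne
  · exact hd.trans omK_sub_omK_sq_dvd
  · exact (dvd_neg.mpr hd).trans (by rw [neg_sub]; exact one_sub_omK_sq_dvd)
  · exact (dvd_neg.mpr hd).trans (by rw [neg_sub]; exact omK_sub_omK_sq_dvd)
  · exact absurd rfl hne

lemma not_dvd_omK : ¬ p ∣ ωK := by
  intro h
  exact hp.not_unit (isUnit_of_dvd_one (h.trans ⟨ωK ^ 2, omK_unit.symm⟩))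

lemma units_card_eq {F : Type*} [CommRing F] [Finite F] [IsDomain F] [Nontrivial F] :
    Nat.card Fˣ = Nat.card F - 1 := by
  classical
  haveI : Fintype F := Fintype.ofFinite _
  have hF : IsField F := Finite.isField_of_domain F
  have hbij : Function.Bijective (fun u : Fˣ => (⟨u.val, fun h => by
      have h1 : u.val * u.inv = 1 := u.val_inv
      rw [h, zero_mul] at h1
      exact zero_ne_one h1⟩ : {x : F // x ≠ 0})) := by
    constructor
    · intro u v huv
      exact Units.ext (congrArg Subtype.val huv)
    · rintro ⟨x, hx⟩
      obtain ⟨y, hy⟩ := hF.mul_inv_cancel hx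
      exact ⟨⟨x, y, hy, by rw [mul_comm]; exact hy⟩, rfl⟩
  have hcong : Nat.card Fˣ = Nat.card {x : F // x ≠ 0} := Nat.card_congr (Equiv.ofBijective _ hbij)
  rw [hcong, Nat.card_eq_fintype_card, Nat.card_eq_fintype_card]
  have : Fintype.card {x : F // x ≠ 0} = Fintype.card F - Fintype.card {x : F // x = 0} :=
    Fintype.card_subtype_compl _
  rw [this, Fintype.card_subtype_eq (0 : F)]

lemma quot_nontrivial : Nontrivial (OK ⧸ Ideal.span {p}) := by
  haveI : (Ideal.span {p}).IsPrime := (Ideal.span_singleton_prime hp.ne_zero).mpr hp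
  exact Ideal.Quotient.nontrivial_iff.mpr (Ideal.span_singleton_ne_top hp.not_unit)

lemma three_dvd_sub_one : 3 * ((Nm p - 1) / 3) = Nm p - 1 := by
  classical
  haveI hfin : Finite (OK ⧸ Ideal.span {p}) := finite_quotient hp.ne_zero
  haveI : Fintype (OK ⧸ Ideal.span {p}) := Fintype.ofFinite _
  haveI : (Ideal.span {p}).IsPrime := (Ideal.span_singleton_prime hp.ne_zero).mpr hp
  haveI : Nontrivial (OK ⧸ Ideal.span {p}) := quot_nontrivial hp hp3
  set mk := Ideal.Quotient.mk (Ideal.span {p}) with hmk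
  have hmul : mk ωK * mk (ωK ^ 2) = 1 := by
    rw [← map_mul, omK_unit, map_one]
  set u : (OK ⧸ Ideal.span {p})ˣ := ⟨mk ωK, mk (ωK ^ 2), hmul, by rw [mul_comm]; exact hmul⟩
    with hu
  have hu3 : u ^ 3 = 1 := by
    apply Units.ext
    rw [Units.val_pow_eq_pow_val, hu, Units.val_one]
    show (mk ωK) ^ 3 = 1
    rw [← map_pow, omK_pow_three, map_one]
  have hune : u ≠ 1 := by
    intro h
    have hval : mk ωK = mk 1 := by
      have h2 := congrArg Units.val h
      rw [hu, Units.val_one] at h2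
      rw [map_one]
      exact h2
    rw [mk_eq_mk_iff_dvd] at hval
    exact omK_ne_one (chi_unique hp hp3 omK_pow_three (one_pow 3) hval)
  haveI : Fact (Nat.Prime 3) := ⟨by norm_num⟩
  have horder : orderOf u = 3 := orderOf_eq_prime hu3 hune
  have hdvd : 3 ∣ Nat.card (OK ⧸ Ideal.span {p})ˣ := by
    rw [Nat.card_eq_fintype_card]
    exact horder ▸ orderOf_dvd_card
  have hcardu : Nat.card (OK ⧸ Ideal.span {p})ˣ = Nat.card (OK ⧸ Ideal.span {p}) - 1 :=
    units_card_eq hp hp3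
  have hNm : Nm p = Nat.card (OK ⧸ Ideal.span {p}) := rfl
  rw [hNm, ← hcardu]
  exact Nat.mul_div_cancel' hdvd

lemma fermat {x : OK} (hx : ¬ p ∣ x) : p ∣ x ^ (Nm p - 1) - 1 := by
  classical
  haveI hfin : Finite (OK ⧸ Ideal.span {p}) := finite_quotient hp.ne_zero
  haveI : Fintype (OK ⧸ Ideal.span {p}) := Fintype.ofFinite _
  haveI : (Ideal.span {p}).IsPrime := (Ideal.span_singleton_prime hp.ne_zero).mpr hp
  haveI : Nontrivial (OK ⧸ Ideal.span {p}) := quot_nontrivial hp hp3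
  have hF : IsField (OK ⧸ Ideal.span {p}) := Finite.isField_of_domain _
  set mk := Ideal.Quotient.mk (Ideal.span {p}) with hmk
  have hne : mk x ≠ 0 := fun h => hx (mk_eq_zero_iff.mp h)
  obtain ⟨y, hy⟩ := hF.mul_inv_cancel hne
  set u : (OK ⧸ Ideal.span {p})ˣ := ⟨mk x, y, hy, by rw [mul_comm]; exact hy⟩ with hu
  have hcard : u ^ Fintype.card (OK ⧸ Ideal.span {p})ˣ = 1 := pow_card_eq_one
  have hval : (mk x) ^ (Fintype.card (OK ⧸ Ideal.span {p})ˣ) = 1 := by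
    have h2 := congrArg Units.val hcard
    rw [Units.val_pow_eq_pow_val, hu, Units.val_one] at h2
    exact h2
  have hcardu : Nat.card (OK ⧸ Ideal.span {p})ˣ = Nat.card (OK ⧸ Ideal.span {p}) - 1 :=
    units_card_eq hp hp3
  have hNm : Nm p = Nat.card (OK ⧸ Ideal.span {p}) := rfl
  have goal2 : mk (x ^ (Nm p - 1)) = mk 1 := by
    rw [map_pow, map_one, hNm, ← hcardu, Nat.card_eq_fintype_card]
    exact hval
  rw [← mk_eq_mk_iff_dvd (c := p)]
  exact goal2

lemma chi_exists {x : OK} (hx : ¬ p ∣ x) :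
    ∃ ζ : OK, ζ ^ 3 = 1 ∧ p ∣ ζ - x ^ ((Nm p - 1) / 3) := by
  classical
  haveI : (Ideal.span {p}).IsPrime := (Ideal.span_singleton_prime hp.ne_zero).mpr hp
  set e := (Nm p - 1) / 3 with he
  set mk := Ideal.Quotient.mk (Ideal.span {p})
  set y : OK ⧸ Ideal.span {p} := mk (x ^ e) with hy
  have hy3 : y ^ 3 = 1 := by
    rw [hy, ← map_pow, ← pow_mul, mul_comm e 3, three_dvd_sub_one hp hp3]
    rw [show (1 : OK ⧸ Ideal.span {p}) = mk 1 from rfl]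
    rw [Ideal.Quotient.mk_eq_mk_iff_sub_mem, Ideal.mem_span_singleton]
    exact fermat hp hp3 hx
  have hωsq : mk (ωK ^ 2) = (mk ωK) ^ 2 := map_pow mk ωK 2
  have key : (y - 1) * (y - mk ωK) * (y - (mk ωK) ^ 2) = 0 := by
    have e1 : mk (ωK ^ 3) = mk 1 := congrArg mk omK_pow_three
    have e2 : mk (ωK ^ 2 + ωK + 1) = mk 0 := congrArg mk omK_sq_add
    have f1 : (mk ωK) ^ 3 = 1 := by simpa using e1
    have f2 : (mk ωK) ^ 2 + mk ωK + 1 = 0 := by simpa using e2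
    linear_combination hy3 + (y - y ^ 2) * f2 + (y - 1) * f1
  have hmk1 : (1 : OK ⧸ Ideal.span {p}) = mk 1 := rfl
  rcases mul_eq_zero.mp key with h' | h'
  · rcases mul_eq_zero.mp h' with h'' | h''
    · refine ⟨1, one_pow 3, ?_⟩
      rw [← mk_eq_mk_iff_dvd]
      rw [sub_eq_zero, hy, hmk1] at h''
      exact h''.symm
    · refine ⟨ωK, omK_pow_three, ?_⟩
      rw [← mk_eq_mk_iff_dvd]
      rw [sub_eq_zero, hy] at h''
      exact h''.symm
  · refine ⟨ωK ^ 2, by rw [← pow_mul, mul_comm, pow_mul, omK_pow_three, one_pow], ?_⟩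
    rw [← mk_eq_mk_iff_dvd, hωsq]
    rw [sub_eq_zero, hy] at h'
    exact h'.symm

lemma chiP_spec {x : OK} (hx : ¬ p ∣ x) :
    (cubicCharP p x) ^ 3 = 1 ∧ p ∣ cubicCharP p x - x ^ ((Nm p - 1) / 3) := by
  obtain ⟨ζ, hζ1, hζ2⟩ := chi_exists hp hp3 hx
  have h : ∃ ζ : OK, ζ ^ 3 = 1 ∧ p ∣ ζ - x ^ ((Nm p - 1) / 3) ∧ ¬ p ∣ x := ⟨ζ, hζ1, hζ2, hx⟩
  rw [cubicCharP, dif_pos h]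
  exact ⟨h.choose_spec.1, h.choose_spec.2.1⟩

lemma chiP_eq {x ζ : OK} (hx : ¬ p ∣ x) (hζ1 : ζ ^ 3 = 1)
    (hζ2 : p ∣ ζ - x ^ ((Nm p - 1) / 3)) : cubicCharP p x = ζ := by
  obtain ⟨h1, h2⟩ := chiP_spec hp hp3 hx
  refine chi_unique hp hp3 h1 hζ1 ?_
  have := dvd_sub h2 hζ2
  simpa using this

lemma chi_not_dvd {x : OK} (hx : ¬ p ∣ x) : ¬ p ∣ cubicCharP p x := by
  intro h
  obtain ⟨h1, _⟩ := chiP_spec hp hp3 hx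
  have h2 : p ∣ (cubicCharP p x) ^ 3 := h.trans (dvd_pow_self _ (by norm_num))
  rw [h1] at h2
  exact hp.not_unit (isUnit_of_dvd_one h2)

lemma chi_one : cubicCharP p 1 = 1 := by
  refine chiP_eq hp hp3 (fun h => hp.not_unit (isUnit_of_dvd_one h)) (one_pow 3) ?_
  rw [one_pow, sub_self]
  exact dvd_zero p

lemma chi_congr {x y : OK} (hx : ¬ p ∣ x) (hy : ¬ p ∣ y) (h : p ∣ x - y) :
    cubicCharP p x = cubicCharP p y := by
  obtain ⟨h1, h2⟩ := chiP_spec hp hp3 hy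
  refine chiP_eq hp hp3 hx h1 ?_
  have hpow : p ∣ y ^ ((Nm p - 1) / 3) - x ^ ((Nm p - 1) / 3) := by
    have := sub_dvd_pow_sub_pow y x ((Nm p - 1) / 3)
    refine dvd_trans ?_ this
    simpa using h.neg_right
  have := dvd_add h2 hpow
  simpa using this

lemma chi_mul {x y : OK} (hx : ¬ p ∣ x) (hy : ¬ p ∣ y) :
    cubicCharP p (x * y) = cubicCharP p x * cubicCharP p y := by
  have hxy : ¬ p ∣ x * y := fun h => (hp.dvd_mul.mp h).elim hx hy
  obtain ⟨hx1, hx2⟩ := chiP_spec hp hp3 hx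
  obtain ⟨hy1, hy2⟩ := chiP_spec hp hp3 hy
  refine chiP_eq hp hp3 hxy (by rw [mul_pow, hx1, hy1, one_mul]) ?_
  rw [mul_pow]
  have key : cubicCharP p x * cubicCharP p y - x ^ ((Nm p - 1) / 3) * y ^ ((Nm p - 1) / 3)
      = (cubicCharP p x - x ^ ((Nm p - 1) / 3)) * cubicCharP p y
        + x ^ ((Nm p - 1) / 3) * (cubicCharP p y - y ^ ((Nm p - 1) / 3)) := by ring
  rw [key]
  exact dvd_add (Dvd.dvd.mul_right hx2 _) (Dvd.dvd.mul_left hy2 _)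

lemma chi_ne_zero {x : OK} (hx : ¬ p ∣ x) : cubicCharP p x ≠ 0 := by
  intro h
  have := (chiP_spec hp hp3 hx).1
  rw [h] at this
  simp at this

end Chi



lemma mk_rep {I : Ideal OK} (x : OK ⧸ I) : Ideal.Quotient.mk I (rep x) = x :=
  Function.surjInv_eq Ideal.Quotient.mk_surjective x

lemma Nm_one : Nm (1 : OK) = 1 := by
  rw [Nm]
  have htop : Ideal.span {(1:OK)} = ⊤ := by simp
  rw [htop]
  haveI : Subsingleton (OK ⧸ (⊤ : Ideal OK)) := by
    constructor
    intro a b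
    obtain ⟨x, rfl⟩ := Ideal.Quotient.mk_surjective a
    obtain ⟨y, rfl⟩ := Ideal.Quotient.mk_surjective b
    rw [Ideal.Quotient.mk_eq_mk_iff_sub_mem]
    trivial
  exact Nat.card_of_subsingleton (Ideal.Quotient.mk _ 0)

lemma moebius_one : moebius (1 : OK) = 1 := by
  rw [moebius]
  have h : ∃ s : Finset (Ideal OK), (∀ P ∈ s, Prime P) ∧
      Ideal.span {(1:OK)} = ∏ P ∈ s, P := by
    refine ⟨∅, fun P hP => absurd hP (Finset.notMem_empty P), ?_⟩
    simp [Ideal.one_eq_top]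
  rw [dif_pos h]
  have hempty : h.choose = ∅ := by
    obtain ⟨hprime, hprod⟩ := h.choose_spec
    by_contra hne
    obtain ⟨P, hP⟩ := Finset.nonempty_iff_ne_empty.mpr hne
    have hdvd : P ∣ ∏ Q ∈ h.choose, Q := Finset.dvd_prod_of_mem _ hP
    rw [← hprod] at hdvd
    have : IsUnit P := isUnit_of_dvd_one (by
      rwa [show Ideal.span {(1:OK)} = 1 by simp [Ideal.one_eq_top]] at hdvd)
    exact (hprime P hP).not_unit this
  rw [hempty]
  simp

lemma isUnit_mk_of_coprime {c x : OK} (h : IsCoprime x c) :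
    IsUnit (Ideal.Quotient.mk (Ideal.span {c}) x) := by
  obtain ⟨a, b', hab⟩ := h
  refine IsUnit.of_mul_eq_one (Ideal.Quotient.mk _ a) ?_
  rw [← map_mul]
  have : Ideal.Quotient.mk (Ideal.span {c}) (x * a) = Ideal.Quotient.mk (Ideal.span {c}) 1 :=
    mk_eq_mk_iff_dvd.mpr ⟨-b', by linear_combination hab⟩
  rwa [map_one] at this

lemma mk_invMod {c x : OK} : Ideal.Quotient.mk (Ideal.span {c}) (invMod c x)
    = Ring.inverse (Ideal.Quotient.mk (Ideal.span {c}) x) := mk_rep _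

lemma invMod_mul {c x : OK} (h : IsUnit (Ideal.Quotient.mk (Ideal.span {c}) x)) :
    c ∣ x * invMod c x - 1 := by
  rw [← mk_eq_mk_iff_dvd]
  rw [map_mul, mk_invMod, Ring.mul_inverse_cancel _ h, map_one]

lemma isUnit_mk_invMod {c x : OK} (h : IsUnit (Ideal.Quotient.mk (Ideal.span {c}) x)) :
    IsUnit (Ideal.Quotient.mk (Ideal.span {c}) (invMod c x)) := by
  rw [mk_invMod, ← h.unit_spec, Ring.inverse_unit]
  exact (h.unit⁻¹).isUnit

lemma not_dvd_of_isUnit_mk {p : OK} (hp : Prime p) {k : ℕ} (hk : 1 ≤ k) {x : OK}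
    (h : IsUnit (Ideal.Quotient.mk (Ideal.span {p ^ k}) x)) : ¬ p ∣ x := by
  intro hdvd
  set u := h.unit with hu
  have hval : (u : OK ⧸ Ideal.span {p ^ k}) = Ideal.Quotient.mk _ x := IsUnit.unit_spec h
  have hmul : Ideal.Quotient.mk (Ideal.span {p ^ k}) (x * rep ((u⁻¹ : _ˣ) : OK ⧸ Ideal.span {p ^ k}))
      = Ideal.Quotient.mk (Ideal.span {p ^ k}) 1 := by
    rw [map_mul, mk_rep, map_one, ← hval, Units.mul_inv]
  have h1 : p ^ k ∣ x * rep ((u⁻¹ : _ˣ) : OK ⧸ Ideal.span {p ^ k}) - 1 := mk_eq_mk_iff_dvd.mp hmul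
  have h2 : p ∣ x * rep ((u⁻¹ : _ˣ) : OK ⧸ Ideal.span {p ^ k}) - 1 :=
    (dvd_pow_self p (by omega : k ≠ 0)).trans h1
  have h3 : p ∣ (1 : OK) := by
    have := dvd_sub (hdvd.mul_right (rep ((u⁻¹ : _ˣ) : OK ⧸ Ideal.span {p ^ k}))) h2
    simpa using this
  exact hp.not_unit (isUnit_of_dvd_one h3)

lemma unit_rep_not_dvd {p : OK} (hp : Prime p) {k : ℕ} (hk : 1 ≤ k)
    (u : (OK ⧸ Ideal.span {p ^ k})ˣ) : ¬ p ∣ rep (u : OK ⧸ Ideal.span {p ^ k}) :=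
  not_dvd_of_isUnit_mk hp hk (by rw [mk_rep]; exact Units.isUnit u)



section Main
variable {p m b w : OK} (hp : Prime p) (hp3 : (3 : OK) ∣ p - 1)
  (hco : IsCoprime (m * b * w) p)
include hp hp3 hco

lemma hco_m : IsCoprime m p := hco.of_mul_left_left.of_mul_left_left
lemma hco_b : IsCoprime b p := hco.of_mul_left_left.of_mul_left_right
lemma hco_w : IsCoprime w p := hco.of_mul_left_right

lemma hco_3 : IsCoprime (3 : OK) p := by
  obtain ⟨t, ht⟩ := hp3
  exact ⟨-t, 1, by linear_combination ht⟩

lemma hco_A : IsCoprime (3 ^ 3 * b * w) p :=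
  (((hco_3 hp hp3 hco).pow_left).mul_left (hco_b hp hp3 hco)).mul_left (hco_w hp hp3 hco)

lemma unit_mk_A {k : ℕ} : IsUnit (Ideal.Quotient.mk (Ideal.span {p ^ k}) (3 ^ 3 * b * w)) :=
  isUnit_mk_of_coprime ((hco_A hp hp3 hco).pow_right)

lemma unit_mk_y₀ {k : ℕ} : IsUnit (Ideal.Quotient.mk (Ideal.span {p ^ k})
    (m ^ 3 * invMod (p ^ k) (3 ^ 3 * b * w))) := by
  rw [map_mul]
  exact ((isUnit_mk_of_coprime ((hco_m hp hp3 hco).pow_left.pow_right)).mul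
    (isUnit_mk_invMod (unit_mk_A hp hp3 hco)))

lemma y₀_cong {k : ℕ} :
    p ^ k ∣ 3 ^ 3 * b * w * (m ^ 3 * invMod (p ^ k) (3 ^ 3 * b * w)) - m ^ 3 := by
  have h := invMod_mul (unit_mk_A hp hp3 hco (k := k))
  obtain ⟨d, hd⟩ := h
  exact ⟨m ^ 3 * d, by linear_combination m ^ 3 * hd⟩

lemma not_dvd_y₀ {k : ℕ} (hk : 1 ≤ k) :
    ¬ p ∣ m ^ 3 * invMod (p ^ k) (3 ^ 3 * b * w) :=
  not_dvd_of_isUnit_mk hp hk (unit_mk_y₀ hp hp3 hco)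

-- pointwise well-definedness of the summand
lemma term_congr {k : ℕ} (hk : 1 ≤ k) {x y : OK} (hx : ¬ p ∣ x) (hy : ¬ p ∣ y)
    (h : p ^ k ∣ x - y) :
    ((cubicCharP p x ^ k : OK) : ℂ) * eC ((x : ℂ) / ((p ^ k : OK) : ℂ)) =
    ((cubicCharP p y ^ k : OK) : ℂ) * eC ((y : ℂ) / ((p ^ k : OK) : ℂ)) := by
  have hq0 : (p ^ k : OK) ≠ 0 := pow_ne_zero _ hp.ne_zero
  rw [chi_congr hp hp3 hx hy ((dvd_pow_self p (by omega : k ≠ 0)).trans h),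
    eC_div_congr hq0 h]

lemma SigA {k : ℕ} (hk : 1 ≤ k) :
    Sig p m b w k k =
      ((cubicCharP p (m ^ 3 * invMod (p ^ k) (3 ^ 3 * b * w)) ^ k : OK) : ℂ) *
        eC (((m ^ 3 * invMod (p ^ k) (3 ^ 3 * b * w) : OK) : ℂ) / ((p ^ k : OK) : ℂ)) := by
  have hu₀ := unit_mk_y₀ hp hp3 hco (k := k)
  have hu₀val : (hu₀.unit : OK ⧸ Ideal.span {p ^ k}) =
      Ideal.Quotient.mk _ (m ^ 3 * invMod (p ^ k) (3 ^ 3 * b * w)) := IsUnit.unit_spec _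
  rw [Sig]
  have hsingle : ∀ u : (OK ⧸ Ideal.span {p ^ k})ˣ, u ≠ hu₀.unit →
      (if p ^ k ∣ 3 ^ 3 * b * w * rep (u : OK ⧸ Ideal.span {p ^ k}) - m ^ 3 then
        ((cubicCharP p (rep (u : OK ⧸ Ideal.span {p ^ k})) ^ k : OK) : ℂ) *
          eC (((rep (u : OK ⧸ Ideal.span {p ^ k}) : OK) : ℂ) / ((p ^ k : OK) : ℂ))
      else 0) = 0 := by
    intro u hu
    rw [if_neg]
    intro hcond
    apply hu
    have hdiff : p ^ k ∣ 3 ^ 3 * b * w *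
        (rep (u : OK ⧸ Ideal.span {p ^ k}) - m ^ 3 * invMod (p ^ k) (3 ^ 3 * b * w)) := by
      have h2 := dvd_sub hcond (y₀_cong hp hp3 hco (k := k))
      convert h2 using 1
      ring
    have hcop : IsCoprime (p ^ k) (3 ^ 3 * b * w) := ((hco_A hp hp3 hco).pow_right).symm
    have hdvd := hcop.dvd_of_dvd_mul_left hdiff
    apply Units.ext
    rw [hu₀val, ← mk_rep (u : OK ⧸ Ideal.span {p ^ k})]
    exact mk_eq_mk_iff_dvd.mpr hdvd
  rw [finsum_eq_single _ hu₀.unit hsingle]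
  have hrepcong : p ^ k ∣ rep (hu₀.unit : OK ⧸ Ideal.span {p ^ k}) -
      m ^ 3 * invMod (p ^ k) (3 ^ 3 * b * w) := by
    rw [← mk_eq_mk_iff_dvd, mk_rep]
    exact hu₀val
  have hcond₀ : p ^ k ∣ 3 ^ 3 * b * w * rep (hu₀.unit : OK ⧸ Ideal.span {p ^ k}) - m ^ 3 := by
    obtain ⟨d1, hd1⟩ := hrepcong
    obtain ⟨d2, hd2⟩ := y₀_cong hp hp3 hco (k := k)
    exact ⟨3 ^ 3 * b * w * d1 + d2, by linear_combination (3^3*b*w) * hd1 + hd2⟩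
  rw [if_pos hcond₀]
  exact term_congr hp hp3 hco hk (unit_rep_not_dvd hp hk hu₀.unit)
    (not_dvd_y₀ hp hp3 hco hk) hrepcong

lemma SigVanish {k r : ℕ} (hk1 : 1 < k) (hr : r < k) : Sig p m b w k r = 0 := by
  obtain ⟨j, rfl⟩ : ∃ j, k = j + 1 := ⟨k - 1, by omega⟩
  have hj : 1 ≤ j := by omega
  have hq0 : (p ^ (j + 1) : OK) ≠ 0 := pow_ne_zero _ hp.ne_zero
  haveI : Finite (OK ⧸ Ideal.span {p ^ (j + 1)}) := finite_quotient hq0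
  haveI : Fintype (OK ⧸ Ideal.span {p ^ (j + 1)}) := Fintype.ofFinite _
  haveI : Fintype ((OK ⧸ Ideal.span {p ^ (j + 1)})ˣ) := Fintype.ofFinite _
  obtain ⟨c₀, hc₀⟩ := exists_eC_ne_one hp.ne_zero hp.not_unit
  have hnilp : ∀ s : OK, IsNilpotent (Ideal.Quotient.mk (Ideal.span {p ^ (j + 1)})
      (p ^ j * s)) := by
    intro s
    refine ⟨j + 1, ?_⟩
    rw [← map_pow, mk_eq_zero_iff, mul_pow, ← pow_mul]
    exact Dvd.dvd.mul_right (pow_dvd_pow p (by nlinarith)) _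
  have hUadd : ∀ u : (OK ⧸ Ideal.span {p ^ (j + 1)})ˣ,
      IsUnit ((u : OK ⧸ Ideal.span {p ^ (j + 1)}) +
        Ideal.Quotient.mk (Ideal.span {p ^ (j + 1)}) (p ^ j * c₀)) := fun u =>
    (hnilp c₀).isUnit_add_left_of_commute u.isUnit (Commute.all _ _)
  have hUsub : ∀ u : (OK ⧸ Ideal.span {p ^ (j + 1)})ˣ,
      IsUnit ((u : OK ⧸ Ideal.span {p ^ (j + 1)}) +
        Ideal.Quotient.mk (Ideal.span {p ^ (j + 1)}) (- (p ^ j * c₀))) := fun u => by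
    rw [map_neg]
    exact ((hnilp c₀).neg).isUnit_add_left_of_commute u.isUnit (Commute.all _ _)
  set τ : (OK ⧸ Ideal.span {p ^ (j + 1)})ˣ ≃ (OK ⧸ Ideal.span {p ^ (j + 1)})ˣ :=
    { toFun := fun u => (hUadd u).unit
      invFun := fun u => (hUsub u).unit
      left_inv := fun u => by
        apply Units.ext
        rw [IsUnit.unit_spec, IsUnit.unit_spec, map_neg]
        ring
      right_inv := fun u => by
        apply Units.ext
        rw [IsUnit.unit_spec, IsUnit.unit_spec, map_neg]
        ring } with hτ
  set g : (OK ⧸ Ideal.span {p ^ (j + 1)})ˣ → ℂ := fun u =>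
    if p ^ r ∣ 3 ^ 3 * b * w * rep (u : OK ⧸ Ideal.span {p ^ (j + 1)}) - m ^ 3 then
      ((cubicCharP p (rep (u : OK ⧸ Ideal.span {p ^ (j + 1)})) ^ (j + 1) : OK) : ℂ) *
        eC (((rep (u : OK ⧸ Ideal.span {p ^ (j + 1)}) : OK) : ℂ) / ((p ^ (j + 1) : OK) : ℂ))
    else 0 with hg
  have hSig : Sig p m b w (j + 1) r = ∑ᶠ u, g u := rfl
  set E : ℂ := eC ((c₀ : ℂ) / ((p : OK) : ℂ)) with hE
  -- key equivariance
  have hkey : ∀ u, g (τ u) = E * g u := by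
    intro u
    have hτval : (τ u : OK ⧸ Ideal.span {p ^ (j + 1)}) =
        Ideal.Quotient.mk _ (rep (u : OK ⧸ Ideal.span {p ^ (j + 1)}) + p ^ j * c₀) := by
      show ((hUadd u).unit : OK ⧸ Ideal.span {p ^ (j + 1)}) = _
      rw [IsUnit.unit_spec, map_add, mk_rep]
    have hcong : p ^ (j + 1) ∣ rep (τ u : OK ⧸ Ideal.span {p ^ (j + 1)}) -
        (rep (u : OK ⧸ Ideal.span {p ^ (j + 1)}) + p ^ j * c₀) := by
      rw [← mk_eq_mk_iff_dvd, mk_rep]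
      exact hτval
    obtain ⟨d, hd⟩ := hcong
    -- conditions are equivalent
    have hcondiff : ∀ d' : OK, (p ^ r ∣ 3 ^ 3 * b * w * rep (τ u : OK ⧸ Ideal.span {p ^ (j + 1)}) - m ^ 3
        ↔ p ^ r ∣ 3 ^ 3 * b * w * rep (u : OK ⧸ Ideal.span {p ^ (j + 1)}) - m ^ 3) := by
      intro _
      have hzr : (p : OK) ^ r ∣ p ^ j * c₀ + p ^ (j + 1) * d := by
        refine dvd_add (Dvd.dvd.mul_right (pow_dvd_pow p (by omega)) _)
          (Dvd.dvd.mul_right (pow_dvd_pow p (by omega)) _)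
      obtain ⟨s, hs⟩ := hzr
      constructor
      · intro h
        obtain ⟨t, ht⟩ := h
        exact ⟨t - 3 ^ 3 * b * w * s, by linear_combination ht - (3^3*b*w) * hs - (3^3*b*w) * hd⟩
      · intro h
        obtain ⟨t, ht⟩ := h
        exact ⟨t + 3 ^ 3 * b * w * s, by linear_combination ht + (3^3*b*w) * hs + (3^3*b*w) * hd⟩
    -- character equality
    have hchi : cubicCharP p (rep (τ u : OK ⧸ Ideal.span {p ^ (j + 1)})) =
        cubicCharP p (rep (u : OK ⧸ Ideal.span {p ^ (j + 1)})) := by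
      apply chi_congr hp hp3 (unit_rep_not_dvd hp (by omega) _) (unit_rep_not_dvd hp (by omega) _)
      have hpz : p ∣ p ^ j * c₀ + p ^ (j + 1) * d :=
        dvd_add (Dvd.dvd.mul_right (dvd_pow_self p (by omega)) _)
          (Dvd.dvd.mul_right (dvd_pow_self p (by omega)) _)
      obtain ⟨s, hs⟩ := hpz
      exact ⟨s, by linear_combination hd + hs⟩
    -- eC factorization
    have heC : eC (((rep (τ u : OK ⧸ Ideal.span {p ^ (j + 1)}) : OK) : ℂ) / ((p ^ (j + 1) : OK) : ℂ)) =
        E * eC (((rep (u : OK ⧸ Ideal.span {p ^ (j + 1)}) : OK) : ℂ) / ((p ^ (j + 1) : OK) : ℂ)) := by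
      rw [eC_div_congr hq0 ⟨d, hd⟩]
      have hsplit : (((rep (u : OK ⧸ Ideal.span {p ^ (j + 1)}) + p ^ j * c₀ : OK)) : ℂ) /
          ((p ^ (j + 1) : OK) : ℂ) =
          (c₀ : ℂ) / ((p : OK) : ℂ) +
          ((rep (u : OK ⧸ Ideal.span {p ^ (j + 1)}) : OK) : ℂ) / ((p ^ (j + 1) : OK) : ℂ) := by
        have hpc : ((p : OK) : ℂ) ≠ 0 := coe_ne_zero hp.ne_zero
        push_cast
        rw [div_add_div _ _ hpc (pow_ne_zero _ hpc),
          div_eq_div_iff (pow_ne_zero _ hpc) (mul_ne_zero hpc (pow_ne_zero _ hpc))]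
        ring
      rw [hsplit, eC_add]
    rw [hg]
    simp only
    rw [hcondiff 0, hchi, heC]
    by_cases hcond : p ^ r ∣ 3 ^ 3 * b * w * rep (u : OK ⧸ Ideal.span {p ^ (j + 1)}) - m ^ 3
    · rw [if_pos hcond, if_pos hcond]
      ring
    · rw [if_neg hcond, if_neg hcond, mul_zero]
  -- sum manipulation
  have hsum : ∑ᶠ u, g u = E * ∑ᶠ u, g u := by
    conv_lhs => rw [← finsum_comp_equiv τ]
    rw [finsum_eq_sum_of_fintype, finsum_eq_sum_of_fintype, Finset.mul_sum]
    exact Finset.sum_congr rfl (fun u _ => hkey u)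
  have hEne : E ≠ 1 := hc₀
  have : (E - 1) * ∑ᶠ u, g u = 0 := by linear_combination -hsum
  rcases mul_eq_zero.mp this with h | h
  · exact absurd (by linear_combination h) hEne
  · rw [hSig, h]


lemma not_dvd_of_coprime {x : OK} (h : IsCoprime x p) : ¬ p ∣ x := by
  intro hd
  obtain ⟨a, b', hab⟩ := h
  obtain ⟨s, hs⟩ := hd
  exact hp.not_unit (isUnit_of_dvd_one ⟨a * s + b', by linear_combination -hab + a * hs⟩)

lemma chi_pow3 {x : OK} (hx : ¬ p ∣ x) :
    cubicCharP p (x ^ 3) = 1 := by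
  have h1 : cubicCharP p (x * (x * x)) = cubicCharP p x * (cubicCharP p x * cubicCharP p x) := by
    rw [chi_mul hp hp3 hx (fun h => (hp.dvd_mul.mp h).elim hx hx),
      chi_mul hp hp3 hx hx]
  have h2 : x ^ 3 = x * (x * x) := by ring
  rw [h2, h1, show cubicCharP p x * (cubicCharP p x * cubicCharP p x) = cubicCharP p x ^ 3 by ring,
    (chiP_spec hp hp3 hx).1]

lemma chi_final {k : ℕ} (hk : 1 ≤ k) :
    cubicCharP p w * cubicCharP p (m ^ 3 * invMod (p ^ k) (3 ^ 3 * b * w)) =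
      cubicCharP p (invMod (p ^ k) b) := by
  have hnw : ¬ p ∣ w := not_dvd_of_coprime hp hp3 hco (hco_w hp hp3 hco)
  have hnm : ¬ p ∣ m := not_dvd_of_coprime hp hp3 hco (hco_m hp hp3 hco)
  have hnb : ¬ p ∣ b := not_dvd_of_coprime hp hp3 hco (hco_b hp hp3 hco)
  have hn3 : ¬ p ∣ (3 : OK) := not_dvd_of_coprime hp hp3 hco (hco_3 hp hp3 hco)
  have hny₀ : ¬ p ∣ m ^ 3 * invMod (p ^ k) (3 ^ 3 * b * w) := not_dvd_y₀ hp hp3 hco hk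
  have hnB' : ¬ p ∣ invMod (p ^ k) b :=
    not_dvd_of_isUnit_mk hp hk (isUnit_mk_invMod (isUnit_mk_of_coprime
      ((hco_b hp hp3 hco).pow_right)))
  have hmul : ∀ {x y : OK}, ¬ p ∣ x → ¬ p ∣ y → ¬ p ∣ x * y :=
    fun hx hy h => (hp.dvd_mul.mp h).elim hx hy
  have hnm3 : ¬ p ∣ m ^ 3 := fun h => hnm (hp.dvd_of_dvd_pow h)
  have hn33 : ¬ p ∣ (3 : OK) ^ 3 := fun h => hn3 (hp.dvd_of_dvd_pow h)
  -- step 1 : χ(w·y₀·(27 b)) = χ(m³)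
  have hAV : p ∣ 3 ^ 3 * b * w * invMod (p ^ k) (3 ^ 3 * b * w) - 1 :=
    (dvd_pow_self p (by omega : k ≠ 0)).trans (invMod_mul (unit_mk_A hp hp3 hco))
  obtain ⟨s, hs⟩ := hAV
  have hstep1 : cubicCharP p (w * (m ^ 3 * invMod (p ^ k) (3 ^ 3 * b * w)) * (3 ^ 3 * b)) =
      cubicCharP p (m ^ 3) := by
    apply chi_congr hp hp3 (hmul (hmul hnw hny₀) (hmul hn33 hnb)) hnm3
    exact ⟨m ^ 3 * s, by linear_combination m ^ 3 * hs⟩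
  rw [chi_mul hp hp3 (hmul hnw hny₀) (hmul hn33 hnb),
    chi_mul hp hp3 hnw hny₀, chi_mul hp hp3 hn33 hnb,
    chi_pow3 hp hp3 hco hnm, chi_pow3 hp hp3 hco hn3, one_mul] at hstep1
  -- step 2 : χ(b)·χ(B') = 1
  have hbB : p ∣ b * invMod (p ^ k) b - 1 :=
    (dvd_pow_self p (by omega : k ≠ 0)).trans
      (invMod_mul (isUnit_mk_of_coprime ((hco_b hp hp3 hco).pow_right)))
  have hstep2 : cubicCharP p b * cubicCharP p (invMod (p ^ k) b) = 1 := by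
    rw [← chi_mul hp hp3 hnb hnB']
    have := chi_congr hp hp3 (hmul hnb hnB')
      (fun h => hp.not_unit (isUnit_of_dvd_one h)) hbB
    rw [this, chi_one hp hp3]
  -- combine
  linear_combination cubicCharP p (invMod (p ^ k) b) * hstep1 -
    cubicCharP p w * cubicCharP p (m ^ 3 * invMod (p ^ k) (3 ^ 3 * b * w)) * hstep2

lemma cubicCharP_assoc {π x : OK} (hπ : Prime π) (hassoc : Associated p π) :
    cubicCharP π x = cubicCharP p x := by
  have hspan : Ideal.span {π} = Ideal.span {p} :=
    Ideal.span_singleton_eq_span_singleton.mpr hassoc.symm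
  have hNm : Nm π = Nm p := by rw [Nm, Nm, hspan]
  have hdvd_iff : ∀ z : OK, π ∣ z ↔ p ∣ z := fun z => hassoc.symm.dvd_iff_dvd_left
  by_cases hx : p ∣ x
  · rw [cubicCharP, dif_neg, cubicCharP, dif_neg]
    · rintro ⟨ζ, h1, h2, h3⟩; exact h3 hx
    · rintro ⟨ζ, h1, h2, h3⟩; exact h3 ((hdvd_iff x).mpr hx)
  · have hx' : ¬ π ∣ x := fun h => hx ((hdvd_iff x).mp h)
    obtain ⟨ζ, h1, h2⟩ := chi_exists hp hp3 hx
    have hπspec : ∃ ζ' : OK, ζ' ^ 3 = 1 ∧ π ∣ ζ' - x ^ ((Nm π - 1) / 3) ∧ ¬ π ∣ x :=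
      ⟨ζ, h1, by rw [hNm]; exact (hdvd_iff _).mpr h2, hx'⟩
    rw [cubicCharP, dif_pos hπspec]
    obtain ⟨hc1, hc2, -⟩ := hπspec.choose_spec
    generalize hgen : hπspec.choose = ζ'' at hc1 hc2 ⊢
    have h4 : p ∣ ζ'' - x ^ ((Nm π - 1) / 3) := (hdvd_iff _).mp hc2
    rw [hNm] at h4
    exact (chiP_eq hp hp3 hx hc1 h4).symm

lemma cubicChar_eq (x : OK) : cubicChar p x = cubicCharP p x := by
  rw [cubicChar]
  have h : ∃ fs : OKˣ × Multiset OK, (∀ π ∈ fs.2, Prime π) ∧ p = (fs.1 : OK) * fs.2.prod :=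
    ⟨(1, {p}), by simpa using hp, by simp⟩
  rw [dif_pos h]
  obtain ⟨hprime, hprod⟩ := h.choose_spec
  generalize hgen : h.choose = fs at hprime hprod ⊢
  obtain ⟨u0, s0⟩ := fs
  simp only at hprime hprod ⊢
  have hs0 : s0 ≠ 0 := by
    intro h0
    rw [h0] at hprod
    simp only [Multiset.prod_zero, mul_one] at hprod
    exact hp.not_unit (hprod ▸ Units.isUnit u0)
  obtain ⟨π, hπmem⟩ := Multiset.exists_mem_of_ne_zero hs0
  obtain ⟨t, hst⟩ := Multiset.exists_cons_of_mem hπmem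
  have hπ : Prime π := hprime π hπmem
  have hfact : p = ((u0 : OK) * π) * t.prod := by
    rw [hprod, hst, Multiset.prod_cons]; ring
  have htunit : IsUnit t.prod := by
    rcases hp.irreducible.isUnit_or_isUnit hfact with h' | h'
    · exact absurd (isUnit_of_mul_isUnit_right h') hπ.not_unit
    · exact h'
  have ht0 : t = 0 := by
    by_contra h0
    obtain ⟨a, hamem⟩ := Multiset.exists_mem_of_ne_zero h0
    have ha : Prime a := hprime a (by
      rw [hst]
      exact Multiset.mem_cons_of_mem hamem)
    exact ha.not_unit (isUnit_of_dvd_unit (Multiset.dvd_prod hamem) htunit)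
  have hassoc : Associated p π := by
    have hpπ : p = (u0 : OK) * π := by
      rw [hfact, ht0]
      simp
    exact ⟨u0⁻¹, by
      rw [hpπ]
      calc (u0 : OK) * π * (u0⁻¹ : OKˣ) = ((u0 : OK) * (u0⁻¹ : OKˣ)) * π := by ring
        _ = π := by rw [Units.mul_inv]; ring⟩
  rw [hst, ht0]
  simp only [Multiset.map_cons, Multiset.map_zero, Multiset.prod_cons, Multiset.prod_zero, mul_one]
  exact cubicCharP_assoc hp hp3 hco hπ hassoc

lemma SigGauss : Sig p m b w 1 0 = gaussSum 1 p := by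
  rw [Sig, pow_one p, gaussSum]
  apply finsum_congr
  intro u
  rw [if_pos (show p ^ 0 ∣ _ from by rw [pow_zero]; exact one_dvd _), pow_one,
    ← cubicChar_eq hp hp3 hco, one_mul]


end Main

/- Statement 12 -/
theorem stmt12 (p m b w : OK) (hp : Prime p) (hp3 : (3 : OK) ∣ p - 1)
    (k : ℕ) (hk : 1 ≤ k) (hco : IsCoprime (m * b * w) p) :
    (1 < k →
      (∀ r : ℕ, r < k → Sig p m b w k r = 0) ∧
      ((cubicCharP p w ^ k : OK) : ℂ) *
          ∑ r ∈ Finset.range (k + 1),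
            (moebius (p ^ (k - r)) : ℂ) * (Nm (p ^ r) : ℂ) * Sig p m b w k r =
        (Nm (p ^ k) : ℂ) * ((cubicCharP p (invMod (p ^ k) b) ^ k : OK) : ℂ) *
          eC (((m ^ 3 * invMod (p ^ k) (3 ^ 3 * b * w) : OK) : ℂ) / ((p ^ k : OK) : ℂ))) ∧
    (k = 1 →
      ((cubicCharP p w : OK) : ℂ) *
          ∑ r ∈ Finset.range 2,
            (moebius (p ^ (1 - r)) : ℂ) * (Nm (p ^ r) : ℂ) * Sig p m b w 1 r =
        (Nm p : ℂ) * ((cubicCharP p (invMod p b) : OK) : ℂ) *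
            eC (((m ^ 3 * invMod p (3 ^ 3 * b * w) : OK) : ℂ) / (p : ℂ)) +
          ((cubicCharP p w : OK) : ℂ) * (moebius p : ℂ) * gaussSum 1 p) := by
  constructor
  · intro hk1
    refine ⟨fun r hr => SigVanish hp hp3 hco hk1 hr, ?_⟩
    have hsum : ∑ r ∈ Finset.range (k + 1),
        (moebius (p ^ (k - r)) : ℂ) * (Nm (p ^ r) : ℂ) * Sig p m b w k r =
        (moebius (p ^ (k - k)) : ℂ) * (Nm (p ^ k) : ℂ) * Sig p m b w k k := by
      apply Finset.sum_eq_single_of_mem k (Finset.self_mem_range_succ k)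
      intro r hr hne
      rw [SigVanish hp hp3 hco hk1
        (by have := Finset.mem_range.mp hr; omega), mul_zero]
    rw [hsum, Nat.sub_self, pow_zero, moebius_one, Int.cast_one, one_mul,
      SigA hp hp3 hco hk]
    have hfin := chi_final hp hp3 hco hk
    have hcast : ((cubicCharP p w ^ k : OK) : ℂ) *
        ((cubicCharP p (m ^ 3 * invMod (p ^ k) (3 ^ 3 * b * w)) ^ k : OK) : ℂ) =
        ((cubicCharP p (invMod (p ^ k) b) ^ k : OK) : ℂ) := by
      have h2 := congrArg (fun z : OK => ((z ^ k : OK) : ℂ)) hfin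
      simp only [mul_pow] at h2
      push_cast at h2 ⊢
      exact h2
    linear_combination ((Nm (p ^ k) : ℂ) *
      eC (((m ^ 3 * invMod (p ^ k) (3 ^ 3 * b * w) : OK) : ℂ) / ((p ^ k : OK) : ℂ))) * hcast
  · intro _
    rw [Finset.sum_range_succ, Finset.sum_range_one, Nat.sub_zero, Nat.sub_self,
      pow_one, pow_zero, moebius_one, Nm_one, Int.cast_one,
      SigGauss hp hp3 hco, SigA hp hp3 hco le_rfl]
    simp only [pow_one]
    have hfin := chi_final hp hp3 hco (le_rfl : 1 ≤ 1)
    simp only [pow_one] at hfin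
    have hcast : ((cubicCharP p w : OK) : ℂ) *
        ((cubicCharP p (m ^ 3 * invMod p (3 ^ 3 * b * w)) : OK) : ℂ) =
        ((cubicCharP p (invMod p b) : OK) : ℂ) := by
      push_cast
      exact_mod_cast congrArg (fun z : OK => (z : ℂ)) hfin
    push_cast
    linear_combination ((Nm p : ℂ) *
      eC (((m ^ 3 * invMod p (3 ^ 3 * b * w) : OK) : ℂ) / ((p : OK) : ℂ))) * hcast

end CubicSeries
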